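/- Assume the orthogonality relation with constant c > 0. Then for all trace class operators S and A on H, the function S*A belongs to L¹(G), with ‖S*A‖_{L¹(G)} ≤ c · ‖S‖_tr · ‖A‖_tr, and ∫_G (S*A)(x) dμ(x) = c · tr(S) · tr(A). -/

import Mathlib

open MeasureTheory Filter Topology ComplexConjugate
open scoped Pointwise ENNReal InnerProductSpace

noncomputable section

variable {H : Type*} [NormedAddCommGroup H] [InnerProductSpace ℂ H] [CompleteSpace H]

/-- The trace of a (trace class) operator, computed as `∑ ⟨T e_i, e_i⟩` along a fixed
Hilbert basis of `H`. -/
noncomputable def opTrace (T : H →L[ℂ] H) : ℂ :=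
  ∑' i : (exists_hilbertBasis ℂ H).choose,
    ⟪((exists_hilbertBasis ℂ H).choose_spec.choose i : H),
      T ((exists_hilbertBasis ℂ H).choose_spec.choose i)⟫_ℂ

/-- An operator is trace class if it admits a Schmidt decomposition
`T = ∑ᵢ sᵢ (ψᵢ ⊗ φᵢ)` with orthonormal families `ψ, φ` and a summable sequence `s ≥ 0`
of singular values. Here `(ψ ⊗ φ)(ξ) = ⟨ξ, φ⟩ψ`. -/
def IsTraceClass (T : H →L[ℂ] H) : Prop :=
  ∃ (I : Type) (_ : Countable I) (s : I → ℝ) (ψ φ : I → H),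
    Orthonormal ℂ ψ ∧ Orthonormal ℂ φ ∧ (∀ i, 0 ≤ s i) ∧ Summable s ∧
    ∀ ξ : H, HasSum (fun i => s i • (⟪φ i, ξ⟫_ℂ • ψ i)) (T ξ)

/-- The trace norm of a trace class operator: the sum of its singular values. -/
noncomputable def traceNorm (T : H →L[ℂ] H) : ℝ :=
  sInf {r : ℝ | ∃ (I : Type) (_ : Countable I) (s : I → ℝ) (ψ φ : I → H),
    Orthonormal ℂ ψ ∧ Orthonormal ℂ φ ∧ (∀ i, 0 ≤ s i) ∧ HasSum s r ∧
    ∀ ξ : H, HasSum (fun i => s i • (⟪φ i, ξ⟫_ℂ • ψ i)) (T ξ)}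

variable {G : Type*} [Group G] [TopologicalSpace G] [IsTopologicalGroup G]
  [LocallyCompactSpace G] [SigmaCompactSpace G] [T2Space G]
  [MeasurableSpace G] [BorelSpace G]

/-- The conjugation action `α_x(T) = π(x)* T π(x)`. -/
def opConj (π : G →* (H →L[ℂ] H)) (x : G) (T : H →L[ℂ] H) : H →L[ℂ] H :=
  star (π x) * T * π x

/-- The matrix coefficient `C_{ψ,φ}(x) = ⟨π(x)ψ, φ⟩` (the paper's inner product is linear
in the first variable, so it is `⟪φ, π x ψ⟫` in Mathlib's convention). -/
def matCoeff (π : G →* (H →L[ℂ] H)) (ψ φ : H) (x : G) : ℂ :=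
  ⟪φ, π x ψ⟫_ℂ

/-- The operator-operator convolution `(S*T)(x) = tr(S α_x(T))`. -/
noncomputable def opConv (π : G →* (H →L[ℂ] H)) (S T : H →L[ℂ] H) (x : G) : ℂ :=
  opTrace (S * opConj π x T)

open scoped NNReal

set_option linter.unusedSectionVars false
set_option maxHeartbeats 1000000

lemma my_hasSum_norm_inner_sq {K : Type*} (b : HilbertBasis K ℂ H) (x : H) :
    HasSum (fun k => ‖⟪x, b k⟫_ℂ‖ ^ 2) (‖x‖ ^ 2) := by
  have h := (b.hasSum_inner_mul_inner x x).mapL Complex.reCLM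
  convert h using 2 with k
  · rw [← inner_conj_symm x (b k)]
    set z := ⟪b k, x⟫_ℂ
    rw [Complex.reCLM_apply, mul_comm, Complex.mul_conj]
    simp [← Complex.sq_norm, Complex.norm_conj, ← Complex.ofReal_pow]
  · rw [Complex.reCLM_apply, show (⟪x, x⟫_ℂ).re = RCLike.re ⟪x, x⟫_ℂ from rfl,
      inner_self_eq_norm_sq]


lemma my_summable_inner_prod {K : Type*} (b : HilbertBasis K ℂ H) (x y : H) :
    Summable (fun k => ‖⟪x, b k⟫_ℂ‖ * ‖⟪b k, y⟫_ℂ‖) := by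
  have hx := (my_hasSum_norm_inner_sq b x).summable
  have hy := (my_hasSum_norm_inner_sq b y).summable
  refine Summable.of_nonneg_of_le (fun k => mul_nonneg (norm_nonneg _) (norm_nonneg _))
    (fun k => ?_) ((hx.add hy).div_const 2)
  rw [norm_inner_symm (b k) y]
  nlinarith [two_mul_le_add_sq ‖⟪x, b k⟫_ℂ‖ ‖⟪y, b k⟫_ℂ‖]


lemma my_tsum_inner_prod_le {K : Type*} (b : HilbertBasis K ℂ H) (x y : H) :
    ∑' k, ‖⟪x, b k⟫_ℂ‖ * ‖⟪b k, y⟫_ℂ‖ ≤ (‖x‖ ^ 2 + ‖y‖ ^ 2) / 2 := by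
  have hx := my_hasSum_norm_inner_sq b x
  have hy := my_hasSum_norm_inner_sq b y
  have hb : HasSum (fun k => (‖⟪x, b k⟫_ℂ‖ ^ 2 + ‖⟪y, b k⟫_ℂ‖ ^ 2) / 2)
      ((‖x‖ ^ 2 + ‖y‖ ^ 2) / 2) := (hx.add hy).div_const 2
  rw [← hb.tsum_eq]
  refine Summable.tsum_le_tsum (fun k => ?_) (my_summable_inner_prod b x y) hb.summable
  rw [norm_inner_symm (b k) y]
  nlinarith [two_mul_le_add_sq ‖⟪x, b k⟫_ℂ‖ ‖⟪y, b k⟫_ℂ‖]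


lemma my_hasSum_opTrace_comp {I : Type*} {s : I → ℝ} {ψ φ : I → H} {T : H →L[ℂ] H}
    (hψ : ∀ i, ‖ψ i‖ ≤ 1) (hφ : ∀ i, ‖φ i‖ ≤ 1) (hs0 : ∀ i, 0 ≤ s i) (hs : Summable s)
    (hT : ∀ ξ : H, HasSum (fun i => s i • (⟪φ i, ξ⟫_ℂ • ψ i)) (T ξ)) (B : H →L[ℂ] H) :
    HasSum (fun i => (s i : ℂ) * ⟪φ i, B (ψ i)⟫_ℂ) (opTrace (T * B)) := by
  classical
  set K := (exists_hilbertBasis ℂ H).choose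
  set b : HilbertBasis K ℂ H := (exists_hilbertBasis ℂ H).choose_spec.choose with hbdef
  set F : I × K → ℂ :=
    fun p => (s p.1 : ℂ) * (⟪φ p.1, B (b p.2)⟫_ℂ * ⟪(b p.2 : H), ψ p.1⟫_ℂ) with hFdef
  set Bd := ContinuousLinearMap.adjoint B with hBd
  have hrw : ∀ i k, ⟪φ i, B (b k)⟫_ℂ = ⟪Bd (φ i), (b k : H)⟫_ℂ := fun i k =>
    (ContinuousLinearMap.adjoint_inner_left B (b k) (φ i)).symm
  -- (1) fiberwise over k
  have h1 : ∀ k : K, HasSum (fun i => F (i, k)) ⟪(b k : H), T (B (b k))⟫_ℂ := by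
    intro k
    have := (hT (B (b k))).mapL (innerSL ℂ (b k : H))
    convert this using 2 with i
    · rfl
    simp only [hFdef, innerSL_apply_apply, inner_smul_right, RCLike.real_smul_eq_coe_smul (K := ℂ)]
    rfl
    rfl

  -- (3) fiberwise over i
  have h3 : ∀ i : I, HasSum (fun k => F (i, k)) ((s i : ℂ) * ⟪φ i, B (ψ i)⟫_ℂ) := by
    intro i
    have := (b.hasSum_inner_mul_inner (Bd (φ i)) (ψ i)).mul_left (s i : ℂ)
    rw [ContinuousLinearMap.adjoint_inner_left] at this
    convert this using 2 with k
    · rfl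
    rw [hFdef]
    simp only [hrw]
  -- (2) summability of F
  have hnorm : ∀ p : I × K, ‖F p‖ = s p.1 * (‖⟪Bd (φ p.1), (b p.2 : H)⟫_ℂ‖ * ‖⟪(b p.2 : H), ψ p.1⟫_ℂ‖) := by
    intro p
    rw [hFdef]
    simp only [norm_mul, Complex.norm_real, Real.norm_eq_abs, abs_of_nonneg (hs0 p.1), hrw]
  have hFsummable : Summable F := by
    refine Summable.of_norm ?_
    refine (summable_prod_of_nonneg (fun p => norm_nonneg (F p))).2 ⟨fun i => ?_, ?_⟩
    · simp only [hnorm]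
      exact (my_summable_inner_prod b (Bd (φ i)) (ψ i)).mul_left (s i)
    · refine Summable.of_nonneg_of_le (fun i => tsum_nonneg fun k => norm_nonneg _)
        (fun i => ?_) (hs.mul_right ((‖B‖ ^ 2 + 1) / 2))
      simp only [hnorm]
      rw [tsum_mul_left]
      refine mul_le_mul_of_nonneg_left ?_ (hs0 i)
      refine (my_tsum_inner_prod_le b (Bd (φ i)) (ψ i)).trans ?_
      have h4 : ‖Bd (φ i)‖ ≤ ‖B‖ := by
        calc ‖Bd (φ i)‖ ≤ ‖Bd‖ * ‖φ i‖ := Bd.le_opNorm _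
        _ ≤ ‖B‖ * 1 := by
            rw [hBd, LinearIsometryEquiv.norm_map ContinuousLinearMap.adjoint B]
            exact mul_le_mul_of_nonneg_left (hφ i) (norm_nonneg _)
        _ = ‖B‖ := mul_one _
      have h5 : ‖ψ i‖ ≤ 1 := hψ i
      have := norm_nonneg (Bd (φ i))
      have := norm_nonneg (ψ i)
      nlinarith
  -- combine
  have hswap : Summable (F ∘ (Equiv.prodComm K I)) :=
    ((Equiv.prodComm K I).summable_iff).2 hFsummable
  have h6 : HasSum (fun k : K => ⟪(b k : H), T (B (b k))⟫_ℂ) (∑' p, F (Equiv.prodComm K I p)) :=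
    hswap.hasSum.prod_fiberwise fun k => h1 k
  have h7 : opTrace (T * B) = ∑' p, F (Equiv.prodComm K I p) := by
    have hdef : opTrace (T * B) = ∑' k : K, ⟪(b k : H), T (B (b k))⟫_ℂ := rfl
    rw [hdef]
    exact h6.tsum_eq
  have h8 : (∑' p, F (Equiv.prodComm K I p)) = ∑' p, F p := (Equiv.prodComm K I).tsum_eq F
  have h9 : HasSum F (∑' p, F p) := hFsummable.hasSum
  have := h9.prod_fiberwise h3
  rwa [h7, h8]


lemma my_integrable_tsum {α : Type*} [MeasurableSpace α] {μ : Measure α}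
    {E : Type*} [NormedAddCommGroup E] [CompleteSpace E]
    {ι : Type*} [Countable ι] {F : ι → α → E}
    (hmeas : ∀ i, AEStronglyMeasurable (F i) μ)
    (hint : ∀ i, Integrable (F i) μ)
    (hsum : Summable fun i => ∫ a, ‖F i a‖ ∂μ)
    (hpt : ∀ x, Summable fun i => ‖F i x‖) :
    Integrable (fun x => ∑' i, F i x) μ := by
  have hasm : AEStronglyMeasurable (fun x => ∑' i, F i x) μ := by
    refine aestronglyMeasurable_of_tendsto_ae (atTop : Filter (Finset ι))
      (fun s => s.aestronglyMeasurable_sum fun i _ => hmeas i) ?_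
    refine ae_of_all _ fun x => ?_
    have h := ((hpt x).of_norm).hasSum
    simp only [Finset.sum_apply]
    exact h
  refine ⟨hasm, ?_⟩
  have hlt : ∑' i, ∫⁻ a, ‖F i a‖₊ ∂μ ≠ ∞ := by
    have heq : ∀ i, ∫⁻ a, ‖F i a‖₊ ∂μ = ENNReal.ofReal (∫ a, ‖F i a‖ ∂μ) := fun i =>
      (ofReal_integral_norm_eq_lintegral_enorm (hint i)).symm
    simp_rw [heq]
    rw [← ENNReal.ofReal_tsum_of_nonneg (fun i => integral_nonneg fun a => norm_nonneg _) hsum]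
    exact ENNReal.ofReal_ne_top
  rw [HasFiniteIntegral]
  calc ∫⁻ x, ‖∑' i, F i x‖₊ ∂μ ≤ ∫⁻ x, ∑' i, (‖F i x‖₊ : ℝ≥0∞) ∂μ := by
        refine lintegral_mono fun x => ?_
        have hs : Summable fun i => ‖F i x‖₊ := by
          rw [← NNReal.summable_coe]
          simpa [coe_nnnorm] using hpt x
        calc (‖∑' i, F i x‖₊ : ℝ≥0∞) ≤ ((∑' i, ‖F i x‖₊ : ℝ≥0) : ℝ≥0∞) :=
              ENNReal.coe_le_coe.2 (nnnorm_tsum_le hs)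
        _ = ∑' i, (‖F i x‖₊ : ℝ≥0∞) := ENNReal.coe_tsum hs
  _ = ∑' i, ∫⁻ x, ‖F i x‖₊ ∂μ := lintegral_tsum fun i => (hmeas i).enorm
  _ < ∞ := hlt.lt_top


lemma my_key (μ : Measure G)
    (π : G →* (H →L[ℂ] H))
    (hπ_unitary : ∀ x : G, π x ∈ unitary (H →L[ℂ] H))
    (hπ_cont : ∀ ψ : H, Continuous fun x : G => π x ψ)
    (c : ℝ) (hc : 0 < c)
    (hL2 : ∀ ψ φ : H, MemLp (matCoeff π ψ φ) 2 μ)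
    (horth : ∀ ψ₁ ψ₂ φ₁ φ₂ : H,
      ∫ x, matCoeff π ψ₁ φ₁ x * conj (matCoeff π ψ₂ φ₂ x) ∂μ
        = c * (⟪ψ₂, ψ₁⟫_ℂ * conj ⟪φ₂, φ₁⟫_ℂ))
    (S A : H →L[ℂ] H)
    {I J : Type*} [Countable I] [Countable J]
    {s : I → ℝ} {ψ φ : I → H} {t : J → ℝ} {η χ : J → H} {r r' : ℝ}
    (hψ : Orthonormal ℂ ψ) (hφ : Orthonormal ℂ φ) (hs0 : ∀ i, 0 ≤ s i) (hsr : HasSum s r)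
    (hSd : ∀ ξ : H, HasSum (fun i => s i • (⟪φ i, ξ⟫_ℂ • ψ i)) (S ξ))
    (hη : Orthonormal ℂ η) (hχ : Orthonormal ℂ χ) (ht0 : ∀ j, 0 ≤ t j) (htr : HasSum t r')
    (hAd : ∀ ξ : H, HasSum (fun j => t j • (⟪χ j, ξ⟫_ℂ • η j)) (A ξ)) :
    Integrable (opConv π S A) μ ∧ (∫ x, ‖opConv π S A x‖ ∂μ) ≤ c * r * r' ∧
    (∫ x, opConv π S A x ∂μ) = c * opTrace S * opTrace A := by
  classical
  -- unitary representations preserve norms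
  have hπn : ∀ (x : G) (ξ : H), ‖π x ξ‖ = ‖ξ‖ := by
    intro x ξ
    have h1 : star (π x) * π x = 1 := (hπ_unitary x).1
    have h2 : ⟪π x ξ, π x ξ⟫_ℂ = ⟪ξ, ξ⟫_ℂ := by
      rw [← ContinuousLinearMap.adjoint_inner_right (π x) ξ (π x ξ),
        ← ContinuousLinearMap.star_eq_adjoint, ← ContinuousLinearMap.mul_apply, h1,
        ContinuousLinearMap.one_apply]
    have h3 := congrArg Complex.re h2
    rw [show (⟪π x ξ, π x ξ⟫_ℂ).re = RCLike.re ⟪π x ξ, π x ξ⟫_ℂ from rfl,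
      show (⟪ξ, ξ⟫_ℂ).re = RCLike.re ⟪ξ, ξ⟫_ℂ from rfl,
      inner_self_eq_norm_sq, inner_self_eq_norm_sq] at h3
    nlinarith [norm_nonneg (π x ξ), norm_nonneg ξ]
  have hψ1 : ∀ i, ‖ψ i‖ = 1 := fun i => hψ.1 i
  have hφ1 : ∀ i, ‖φ i‖ = 1 := fun i => hφ.1 i
  have hη1 : ∀ j, ‖η j‖ = 1 := fun j => hη.1 j
  have hχ1 : ∀ j, ‖χ j‖ = 1 := fun j => hχ.1 j
  have mc_cont : ∀ a b : H, Continuous (matCoeff π a b) := fun a b =>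
    Continuous.inner continuous_const (hπ_cont a)
  have mc_bound : ∀ (a b : H) (x : G), ‖matCoeff π a b x‖ ≤ ‖b‖ * ‖a‖ := by
    intro a b x
    calc ‖matCoeff π a b x‖ ≤ ‖b‖ * ‖π x a‖ := norm_inner_le_norm _ _
    _ = ‖b‖ * ‖a‖ := by rw [hπn]
  -- L² norm of matrix coefficients of unit vectors
  have hsq : ∀ a b : H, ‖a‖ = 1 → ‖b‖ = 1 → ∫ x, ‖matCoeff π a b x‖ ^ 2 ∂μ = c := by
    intro a b ha hb
    have h := horth a a b b
    rw [inner_self_eq_norm_sq_to_K, inner_self_eq_norm_sq_to_K, ha, hb] at h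
    norm_num at h
    have h2 : ∀ x : G, matCoeff π a b x * conj (matCoeff π a b x)
        = ((‖matCoeff π a b x‖ ^ 2 : ℝ) : ℂ) := by
      intro x
      rw [Complex.mul_conj, Complex.sq_norm]
    rw [show (fun x => matCoeff π a b x * conj (matCoeff π a b x))
        = fun x => ((‖matCoeff π a b x‖ ^ 2 : ℝ) : ℂ) from funext h2] at h
    have h3 : ∫ x, ((‖matCoeff π a b x‖ ^ 2 : ℝ) : ℂ) ∂μ
        = ((∫ x, ‖matCoeff π a b x‖ ^ 2 ∂μ : ℝ) : ℂ) := integral_ofReal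
    rw [h3] at h
    exact_mod_cast h
  have hL2' : ∀ a b : H, MemLp (matCoeff π a b) (ENNReal.ofReal (2:ℝ)) μ := by
    intro a b
    rw [show ENNReal.ofReal (2:ℝ) = 2 from by norm_num]
    exact hL2 a b
  have hL2c : ∀ a b : H, MemLp (fun x => conj (matCoeff π a b x)) (ENNReal.ofReal (2:ℝ)) μ := by
    intro a b
    refine (hL2' a b).of_le (RCLike.continuous_conj.comp (mc_cont a b)).aestronglyMeasurable
      (ae_of_all _ fun x => ?_)
    rw [RCLike.norm_conj]
  have hCS : ∀ a b a' b' : H, ‖a‖ = 1 → ‖b‖ = 1 → ‖a'‖ = 1 → ‖b'‖ = 1 →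
      ∫ x, ‖matCoeff π a b x‖ * ‖matCoeff π a' b' x‖ ∂μ ≤ c := by
    intro a b a' b' ha hb ha' hb'
    have hce : Real.HolderConjugate 2 2 := Real.HolderConjugate.two_two
    have h := integral_mul_norm_le_Lp_mul_Lq (μ := μ) hce (hL2' a b) (hL2' a' b')
    simp_rw [show ∀ y : ℝ, y ^ (2:ℝ) = y ^ 2 from fun y => by
      rw [show (2:ℝ) = ((2:ℕ):ℝ) from by norm_num, Real.rpow_natCast]] at h
    rw [hsq a b ha hb, hsq a' b' ha' hb', ← Real.rpow_add hc] at h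
    norm_num at h
    exact h
  have hint_pair : ∀ a b a' b' : H,
      Integrable (fun x => matCoeff π a b x * conj (matCoeff π a' b' x)) μ := by
    intro a b a' b'
    have hone : MemLp ((fun x => conj (matCoeff π a' b' x)) • (matCoeff π a b)) 1 μ := by
      refine MemLp.smul (p := 2) (q := 2) (hL2 a b) ?_
      rw [show (2:ℝ≥0∞) = ENNReal.ofReal (2:ℝ) from by norm_num]
      exact hL2c a' b'
    have := memLp_one_iff_integrable.mp hone
    refine this.congr (ae_of_all _ fun x => ?_)
    simp only [Pi.smul_apply', smul_eq_mul]
    ring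
  -- the doubly-indexed family of coefficient products
  set F : I × J → G → ℂ := fun p x => (s p.1 : ℂ) * ((t p.2 : ℂ) *
      (matCoeff π (ψ p.1) (χ p.2) x * conj (matCoeff π (φ p.1) (η p.2) x))) with hFdef
  have hFmeas : ∀ p, AEStronglyMeasurable (F p) μ := fun p =>
    (continuous_const.mul (continuous_const.mul ((mc_cont (ψ p.1) (χ p.2)).mul
      (RCLike.continuous_conj.comp (mc_cont (φ p.1) (η p.2)))))).aestronglyMeasurable
  have hFint : ∀ p, Integrable (F p) μ := fun p =>
    (((hint_pair (ψ p.1) (χ p.2) (φ p.1) (η p.2)).const_mul _).const_mul _)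
  have hFnorm : ∀ p x, ‖F p x‖ = s p.1 * t p.2 *
      (‖matCoeff π (ψ p.1) (χ p.2) x‖ * ‖matCoeff π (φ p.1) (η p.2) x‖) := by
    intro p x
    rw [hFdef]
    simp only [norm_mul, Complex.norm_real, Real.norm_eq_abs, abs_of_nonneg (hs0 p.1),
      abs_of_nonneg (ht0 p.2), RCLike.norm_conj]
    ring
  have hFintnorm : ∀ p, ∫ x, ‖F p x‖ ∂μ ≤ s p.1 * t p.2 * c := by
    intro p
    have : ∫ x, ‖F p x‖ ∂μ = s p.1 * t p.2 *
        ∫ x, ‖matCoeff π (ψ p.1) (χ p.2) x‖ * ‖matCoeff π (φ p.1) (η p.2) x‖ ∂μ := by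
      simp_rw [hFnorm]
      rw [integral_const_mul]
    rw [this]
    exact mul_le_mul_of_nonneg_left
      (hCS _ _ _ _ (hψ1 p.1) (hχ1 p.2) (hφ1 p.1) (hη1 p.2))
      (mul_nonneg (hs0 p.1) (ht0 p.2))
  have hstsum : Summable fun p : I × J => s p.1 * t p.2 :=
    hsr.summable.mul_of_nonneg htr.summable hs0 ht0
  have hFsumint : Summable fun p => ∫ x, ‖F p x‖ ∂μ :=
    Summable.of_nonneg_of_le (fun p => integral_nonneg fun x => norm_nonneg _)
      hFintnorm (hstsum.mul_right c)
  -- pointwise expansion of the convolution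
  have hconjA : ∀ (x : G) (a b : H), ⟪b, (opConj π x A) a⟫_ℂ = ⟪π x b, A (π x a)⟫_ℂ := by
    intro x a b
    rw [opConj, ContinuousLinearMap.mul_apply, ContinuousLinearMap.mul_apply,
      ContinuousLinearMap.star_eq_adjoint, ContinuousLinearMap.adjoint_inner_right]
  have hpt : ∀ x : G, HasSum (fun p => F p x) (opConv π S A x) := by
    intro x
    have ha : ∀ i : I, HasSum (fun j => F (i, j) x)
        ((s i : ℂ) * ⟪φ i, (opConj π x A) (ψ i)⟫_ℂ) := by
      intro i
      have h0 := ((hAd (π x (ψ i))).mapL (innerSL ℂ (π x (φ i)))).mul_left (s i : ℂ)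
      rw [hconjA]
      simp only [innerSL_apply_apply, inner_smul_right, RCLike.real_smul_eq_coe_smul (K := ℂ)] at h0
      have heq : (fun j => F (i, j) x) = fun j =>
          (s i : ℂ) * ((t j : ℂ) * (⟪χ j, π x (ψ i)⟫_ℂ * ⟪π x (φ i), η j⟫_ℂ)) := by
        funext j
        rw [hFdef]
        simp only [matCoeff]
        rw [inner_conj_symm]
      rw [heq]
      exact h0
    have hb : HasSum (fun i => (s i : ℂ) * ⟪φ i, (opConj π x A) (ψ i)⟫_ℂ) (opConv π S A x) :=
      my_hasSum_opTrace_comp (fun i => (hψ1 i).le) (fun i => (hφ1 i).le) hs0 hsr.summable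
        hSd (opConj π x A)
    have hsumF : Summable fun p => F p x := by
      refine Summable.of_norm_bounded hstsum fun p => ?_
      rw [hFnorm]
      have h1 := mc_bound (ψ p.1) (χ p.2) x
      have h2 := mc_bound (φ p.1) (η p.2) x
      rw [hψ1, hχ1, one_mul] at h1
      rw [hφ1, hη1, one_mul] at h2
      have hn2 := norm_nonneg (matCoeff π (φ p.1) (η p.2) x)
      have h12 : ‖matCoeff π (ψ p.1) (χ p.2) x‖ * ‖matCoeff π (φ p.1) (η p.2) x‖ ≤ 1 * 1 :=
        mul_le_mul h1 h2 hn2 zero_le_one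
      rw [one_mul] at h12
      calc s p.1 * t p.2 * (‖matCoeff π (ψ p.1) (χ p.2) x‖ * ‖matCoeff π (φ p.1) (η p.2) x‖)
          ≤ s p.1 * t p.2 * 1 :=
            mul_le_mul_of_nonneg_left h12 (mul_nonneg (hs0 p.1) (ht0 p.2))
      _ = s p.1 * t p.2 := mul_one _
    have h := hsumF.hasSum
    have heq : ∑' p, F p x = opConv π S A x := (h.prod_fiberwise ha).unique hb
    rwa [heq] at h
  have hptnorm : ∀ x : G, Summable fun p => ‖F p x‖ := fun x => (hpt x).summable.norm
  -- conclusions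
  have hconv_eq : opConv π S A = fun x => ∑' p, F p x :=
    funext fun x => ((hpt x).tsum_eq).symm
  have hInt : Integrable (opConv π S A) μ := by
    rw [hconv_eq]
    exact my_integrable_tsum hFmeas hFint hFsumint hptnorm
  refine ⟨hInt, ?_, ?_⟩
  · -- norm bound
    have hnormfam : Integrable (fun x => ∑' p, ‖F p x‖) μ :=
      my_integrable_tsum (fun p => (hFmeas p).norm) (fun p => (hFint p).norm)
        (by simpa using hFsumint) (fun x => by simpa using hptnorm x)
    have step1 : ∫ x, ‖opConv π S A x‖ ∂μ ≤ ∫ x, ∑' p, ‖F p x‖ ∂μ := by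
      refine integral_mono hInt.norm hnormfam fun x => ?_
      rw [← (hpt x).tsum_eq]
      exact norm_tsum_le_tsum_norm (hptnorm x)
    have step2 : ∫ x, ∑' p, ‖F p x‖ ∂μ = ∑' p, ∫ x, ‖F p x‖ ∂μ :=
      (integral_tsum_of_summable_integral_norm (fun p => (hFint p).norm)
        (by simpa using hFsumint)).symm
    have step3 : ∑' p, ∫ x, ‖F p x‖ ∂μ ≤ ∑' p : I × J, s p.1 * t p.2 * c :=
      Summable.tsum_le_tsum hFintnorm hFsumint (hstsum.mul_right c)
    have step4 : ∑' p : I × J, s p.1 * t p.2 * c = c * r * r' := by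
      have := ((hsr.mul htr hstsum).mul_right c).tsum_eq
      rw [this]
      ring
    calc ∫ x, ‖opConv π S A x‖ ∂μ ≤ ∫ x, ∑' p, ‖F p x‖ ∂μ := step1
    _ = ∑' p, ∫ x, ‖F p x‖ ∂μ := step2
    _ ≤ ∑' p : I × J, s p.1 * t p.2 * c := step3
    _ = c * r * r' := step4
  · -- integral value
    set u : I → ℂ := fun i => (s i : ℂ) * ⟪φ i, ψ i⟫_ℂ with hudef
    set v : J → ℂ := fun j => (t j : ℂ) * ⟪χ j, η j⟫_ℂ with hvdef
    have hu : HasSum u (opTrace S) := by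
      have := my_hasSum_opTrace_comp (fun i => (hψ1 i).le) (fun i => (hφ1 i).le) hs0
        hsr.summable hSd (1 : H →L[ℂ] H)
      rw [mul_one] at this
      simpa [hudef, ContinuousLinearMap.one_apply] using this
    have hv : HasSum v (opTrace A) := by
      have := my_hasSum_opTrace_comp (fun j => (hη1 j).le) (fun j => (hχ1 j).le) ht0
        htr.summable hAd (1 : H →L[ℂ] H)
      rw [mul_one] at this
      simpa [hvdef, ContinuousLinearMap.one_apply] using this
    have huv : Summable fun p : I × J => u p.1 * v p.2 := by
      refine Summable.of_norm_bounded hstsum fun p => ?_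
      have h1 : ‖⟪φ p.1, ψ p.1⟫_ℂ‖ ≤ 1 := by
        have := norm_inner_le_norm (𝕜 := ℂ) (φ p.1) (ψ p.1)
        rwa [hφ1, hψ1, one_mul] at this
      have h2 : ‖⟪χ p.2, η p.2⟫_ℂ‖ ≤ 1 := by
        have := norm_inner_le_norm (𝕜 := ℂ) (χ p.2) (η p.2)
        rwa [hχ1, hη1, one_mul] at this
      have hbu : ‖u p.1‖ ≤ s p.1 := by
        rw [hudef]
        simp only [norm_mul, Complex.norm_real, Real.norm_eq_abs, abs_of_nonneg (hs0 p.1)]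
        calc s p.1 * ‖⟪φ p.1, ψ p.1⟫_ℂ‖ ≤ s p.1 * 1 := mul_le_mul_of_nonneg_left h1 (hs0 p.1)
        _ = s p.1 := mul_one _
      have hbv : ‖v p.2‖ ≤ t p.2 := by
        rw [hvdef]
        simp only [norm_mul, Complex.norm_real, Real.norm_eq_abs, abs_of_nonneg (ht0 p.2)]
        calc t p.2 * ‖⟪χ p.2, η p.2⟫_ℂ‖ ≤ t p.2 * 1 := mul_le_mul_of_nonneg_left h2 (ht0 p.2)
        _ = t p.2 := mul_one _
      rw [norm_mul]
      exact mul_le_mul hbu hbv (norm_nonneg _) (hs0 p.1)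
    have hprod : HasSum (fun p : I × J => u p.1 * v p.2) (opTrace S * opTrace A) :=
      hu.mul hv huv
    have hval : ∀ p : I × J, ∫ x, F p x ∂μ = (c : ℂ) * (u p.1 * v p.2) := by
      intro p
      rw [hFdef]
      simp only
      rw [integral_const_mul, integral_const_mul, horth (ψ p.1) (φ p.1) (χ p.2) (η p.2)]
      rw [hudef, hvdef]
      simp only
      rw [← inner_conj_symm (χ p.2) (η p.2)]
      ring
    calc ∫ x, opConv π S A x ∂μ = ∫ x, ∑' p, F p x ∂μ := by rw [hconv_eq]
    _ = ∑' p, ∫ x, F p x ∂μ := (integral_tsum_of_summable_integral_norm hFint hFsumint).symm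
    _ = (c : ℂ) * (opTrace S * opTrace A) := by
        rw [show (fun p : I × J => ∫ x, F p x ∂μ) = fun p => (c : ℂ) * (u p.1 * v p.2) from
          funext hval]
        exact (hprod.mul_left (c : ℂ)).tsum_eq
    _ = c * opTrace S * opTrace A := by ring


/-- Under the orthogonality relation with constant `c > 0`, for all trace
class operators `S` and `A`, the convolution `S*A` belongs to `L¹(G)`, with
`‖S*A‖_{L¹} ≤ c‖S‖_tr‖A‖_tr` and `∫ S*A dμ = c · tr(S) · tr(A)`. -/
theorem opConv_mem_L1 (μ : Measure G) [μ.IsMulRightInvariant] [IsFiniteMeasureOnCompacts μ]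
    [μ.IsOpenPosMeasure] [μ.Regular] (hμ : μ ≠ 0)
    (π : G →* (H →L[ℂ] H))
    (hπ_unitary : ∀ x : G, π x ∈ unitary (H →L[ℂ] H))
    (hπ_cont : ∀ ψ : H, Continuous fun x : G => π x ψ)
    (c : ℝ) (hc : 0 < c)
    (hL2 : ∀ ψ φ : H, MemLp (matCoeff π ψ φ) 2 μ)
    (horth : ∀ ψ₁ ψ₂ φ₁ φ₂ : H,
      ∫ x, matCoeff π ψ₁ φ₁ x * conj (matCoeff π ψ₂ φ₂ x) ∂μ
        = c * (⟪ψ₂, ψ₁⟫_ℂ * conj ⟪φ₂, φ₁⟫_ℂ))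
    (S A : H →L[ℂ] H) (hS : IsTraceClass S) (hA : IsTraceClass A) :
    Integrable (opConv π S A) μ ∧
    (∫ x, ‖opConv π S A x‖ ∂μ) ≤ c * traceNorm S * traceNorm A ∧
    (∫ x, opConv π S A x ∂μ) = c * opTrace S * opTrace A := by
    classical
  obtain ⟨I, hI, s, ψ, φ, hψ, hφ, hs0, hssum, hSd⟩ := hS
  obtain ⟨J, hJ, t, η, χ, hη, hχ, ht0, htsum, hAd⟩ := hA
  have key := my_key μ π hπ_unitary hπ_cont c hc hL2 horth S A hψ hφ hs0 hssum.hasSum hSd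
    hη hχ ht0 htsum.hasSum hAd
  set setS : Set ℝ := {r : ℝ | ∃ (I : Type) (_ : Countable I) (s : I → ℝ) (ψ φ : I → H),
    Orthonormal ℂ ψ ∧ Orthonormal ℂ φ ∧ (∀ i, 0 ≤ s i) ∧ HasSum s r ∧
    ∀ ξ : H, HasSum (fun i => s i • (⟪φ i, ξ⟫_ℂ • ψ i)) (S ξ)} with hsetS
  set setA : Set ℝ := {r : ℝ | ∃ (J : Type) (_ : Countable J) (t : J → ℝ) (η χ : J → H),
    Orthonormal ℂ η ∧ Orthonormal ℂ χ ∧ (∀ j, 0 ≤ t j) ∧ HasSum t r ∧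
    ∀ ξ : H, HasSum (fun j => t j • (⟪χ j, ξ⟫_ℂ • η j)) (A ξ)} with hsetA
  have htS : traceNorm S = sInf setS := rfl
  have htA : traceNorm A = sInf setA := rfl
  have hSmem : (∑' i, s i) ∈ setS := ⟨I, hI, s, ψ, φ, hψ, hφ, hs0, hssum.hasSum, hSd⟩
  have hAmem : (∑' j, t j) ∈ setA := ⟨J, hJ, t, η, χ, hη, hχ, ht0, htsum.hasSum, hAd⟩
  have hnonnegS : ∀ r ∈ setS, 0 ≤ r := by
    rintro r ⟨I', hI', s', ψ', φ', hψ', hφ', hs0', hsum', hd'⟩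
    exact hasSum_le (fun i => hs0' i) hasSum_zero hsum'
  have hnonnegA : ∀ r ∈ setA, 0 ≤ r := by
    rintro r ⟨J', hJ', t', η', χ', hη', hχ', ht0', hsum', hd'⟩
    exact hasSum_le (fun j => ht0' j) hasSum_zero hsum'
  have hbound : ∀ r ∈ setS, ∀ r'' ∈ setA, (∫ x, ‖opConv π S A x‖ ∂μ) ≤ c * r * r'' := by
    rintro r ⟨I', hI', s', ψ', φ', hψ', hφ', hs0', hsum', hd'⟩
      r'' ⟨J', hJ', t', η', χ', hη', hχ', ht0', hsum'', hd''⟩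
    exact (my_key μ π hπ_unitary hπ_cont c hc hL2 horth S A hψ' hφ' hs0' hsum' hd'
      hη' hχ' ht0' hsum'' hd'').2.1
  refine ⟨key.1, ?_, key.2.2⟩
  rw [htS, htA]
  set m := ∫ x, ‖opConv π S A x‖ ∂μ with hm
  have hS0 : 0 ≤ sInf setS := le_csInf ⟨_, hSmem⟩ hnonnegS
  have stepA : ∀ r'' ∈ setA, m ≤ c * sInf setS * r'' := by
    intro r'' hr''
    have hr''0 : 0 ≤ r'' := hnonnegA r'' hr''
    rcases eq_or_lt_of_le hr''0 with h0 | hpos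
    · have h1 : m ≤ 0 := by
        have := hbound _ hSmem r'' hr''
        rw [← h0, mul_zero] at this
        exact this
      rw [← h0, mul_zero]
      exact h1
    · have hcr : (0:ℝ) < c * r'' := mul_pos hc hpos
      have h2 : m / (c * r'') ≤ sInf setS := by
        refine le_csInf ⟨_, hSmem⟩ fun r hr => ?_
        rw [div_le_iff₀ hcr]
        calc m ≤ c * r * r'' := hbound r hr r'' hr''
        _ = r * (c * r'') := by ring
      calc m = m / (c * r'') * (c * r'') := by field_simp
      _ ≤ sInf setS * (c * r'') := mul_le_mul_of_nonneg_right h2 hcr.le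
      _ = c * sInf setS * r'' := by ring
  have hcs0 : 0 ≤ c * sInf setS := mul_nonneg hc.le hS0
  rcases eq_or_lt_of_le hcs0 with h0 | hpos
  · have h1 : m ≤ 0 := by
      have := stepA _ hAmem
      rw [← h0, zero_mul] at this
      exact this
    calc m ≤ 0 := h1
    _ = c * sInf setS * sInf setA := by
        rw [← h0, zero_mul]
  · have h2 : m / (c * sInf setS) ≤ sInf setA := by
      refine le_csInf ⟨_, hAmem⟩ fun r'' hr'' => ?_
      rw [div_le_iff₀ hpos]
      calc m ≤ c * sInf setS * r'' := stepA r'' hr''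
      _ = r'' * (c * sInf setS) := by ring
    calc m = m / (c * sInf setS) * (c * sInf setS) := (div_mul_cancel₀ m hpos.ne').symm
    _ ≤ sInf setA * (c * sInf setS) := mul_le_mul_of_nonneg_right h2 hpos.le
    _ = c * sInf setS * sInf setA := by ring
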